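/- Let G be a finite group of order g, let ρ : G → Matrix (Fin N) (Fin N) ℂ be a representation of G by complex matrices (a monoid homomorphism), and let q : G → ℝ satisfy ∑_{h∈G} q(h) = 1, q(h) ≥ 0 for all h, and q(h) > 0 for every h ≠ 1. Then, as t → ∞ (the filter atTop on ℝ), Matrix.exp(t • (∑_{h∈G} q(h) • ρ(h) − 1)) converges to the uniform mixture Φ* = (1/g) • ∑_{h∈G} ρ(h), i.e. Tendsto (fun t => Matrix.exp (t • (∑_h q(h) • ρ(h) − 1))) atTop (𝓝 ((g : ℂ)⁻¹ • ∑_h ρ(h))). -/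

import Mathlib

open Filter Matrix NormedSpace Topology


section ExpHelpers

variable {N : ℕ}

/-- Apply a continuous linear map to the matrix exponential series. -/
private lemma map_exp_matrix {E : Type*} [NormedAddCommGroup E] [NormedSpace ℂ E]
    (L : Matrix (Fin N) (Fin N) ℂ →ₗ[ℂ] E) (M : Matrix (Fin N) (Fin N) ℂ) :
    L (exp M) = ∑' n : ℕ, L ((n.factorial :ℂ)⁻¹ • M ^ n) := by
  letI : SeminormedRing (Matrix (Fin N) (Fin N) ℂ) := Matrix.linftyOpSemiNormedRing
  letI : NormedRing (Matrix (Fin N) (Fin N) ℂ) := Matrix.linftyOpNormedRing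
  letI : NormedAlgebra ℂ (Matrix (Fin N) (Fin N) ℂ) := Matrix.linftyOpNormedAlgebra
  have hc : Continuous L := L.continuous_of_finiteDimensional
  have hs := NormedSpace.expSeries_summable' (𝕂 := ℂ) M
  rw [NormedSpace.exp_eq_tsum (𝕂 := ℂ)]
  exact (hs.hasSum.map L hc).tsum_eq.symm

private lemma exp_mulVec_eq_tsum (M : Matrix (Fin N) (Fin N) ℂ) (v : Fin N → ℂ) :
    exp M *ᵥ v = ∑' n : ℕ, (n.factorial : ℂ)⁻¹ • (M ^ n *ᵥ v) := by
  let L : Matrix (Fin N) (Fin N) ℂ →ₗ[ℂ] (Fin N → ℂ) :=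
    { toFun := fun P => P *ᵥ v
      map_add' := fun P Q => Matrix.add_mulVec P Q v
      map_smul' := fun c P => Matrix.smul_mulVec c P v }
  have := map_exp_matrix L M
  simpa only [L, LinearMap.coe_mk, AddHom.coe_mk, Matrix.smul_mulVec] using this

private lemma mul_exp_eq_tsum (Φ M : Matrix (Fin N) (Fin N) ℂ) :
    Φ * exp M = ∑' n : ℕ, (n.factorial : ℂ)⁻¹ • (Φ * M ^ n) := by
  letI : SeminormedRing (Matrix (Fin N) (Fin N) ℂ) := Matrix.linftyOpSemiNormedRing
  letI : NormedRing (Matrix (Fin N) (Fin N) ℂ) := Matrix.linftyOpNormedRing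
  letI : NormedAlgebra ℂ (Matrix (Fin N) (Fin N) ℂ) := Matrix.linftyOpNormedAlgebra
  let L : Matrix (Fin N) (Fin N) ℂ →ₗ[ℂ] Matrix (Fin N) (Fin N) ℂ :=
    { toFun := fun P => Φ * P
      map_add' := fun P Q => mul_add Φ P Q
      map_smul' := fun c P => mul_smul_comm c Φ P }
  have := map_exp_matrix L M
  simp only [L, LinearMap.coe_mk, AddHom.coe_mk, mul_smul_comm] at this
  exact this

/-- exp of a scalar matrix. -/
private lemma exp_smul_one (c : ℂ) :
    exp (c • (1 : Matrix (Fin N) (Fin N) ℂ)) = Complex.exp c • 1 := by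
  letI : SeminormedRing (Matrix (Fin N) (Fin N) ℂ) := Matrix.linftyOpSemiNormedRing
  letI : NormedRing (Matrix (Fin N) (Fin N) ℂ) := Matrix.linftyOpNormedRing
  letI : NormedAlgebra ℂ (Matrix (Fin N) (Fin N) ℂ) := Matrix.linftyOpNormedAlgebra
  have h1 : c • (1 : Matrix (Fin N) (Fin N) ℂ) = algebraMap ℂ _ c :=
    (Algebra.algebraMap_eq_smul_one c).symm
  have h2 : Complex.exp c • (1 : Matrix (Fin N) (Fin N) ℂ) = algebraMap ℂ _ (Complex.exp c) :=
    (Algebra.algebraMap_eq_smul_one _).symm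
  rw [h1, h2, Complex.exp_eq_exp_ℂ]
  exact (NormedSpace.algebraMap_exp_comm c).symm

end ExpHelpers


section SpectralHelpers

variable {N : ℕ}

private lemma pow_mulVec_eig (A : Matrix (Fin N) (Fin N) ℂ) (l : ℂ) (v : Fin N → ℂ)
    (hv : A *ᵥ v = l • v) (n : ℕ) : A ^ n *ᵥ v = l ^ n • v := by
  induction n with
  | zero => simp [Matrix.one_mulVec]
  | succ n ih =>
    rw [pow_succ, ← Matrix.mulVec_mulVec, hv, Matrix.mulVec_smul, ih, smul_smul, pow_succ,
      mul_comm]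

private lemma eig_abs_le_one (A : Matrix (Fin N) (Fin N) ℂ) (C : ℝ) (v : Fin N → ℂ) (l : ℂ)
    (hb : ∀ n : ℕ, ‖A ^ n *ᵥ v‖ ≤ C) (hv : A *ᵥ v = l • v) (h0 : v ≠ 0) : ‖l‖ ≤ 1 := by
  by_contra hl
  push_neg at hl
  have hv0 : 0 < ‖v‖ := norm_pos_iff.mpr h0
  obtain ⟨n, hn⟩ := ((tendsto_pow_atTop_atTop_of_one_lt hl).eventually_ge_atTop
    ((C + 1) / ‖v‖)).exists
  have h1 : ‖A ^ n *ᵥ v‖ = ‖l‖ ^ n * ‖v‖ := by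
    rw [pow_mulVec_eig A l v hv n, norm_smul, norm_pow]
  have h2 := hb n
  rw [h1] at h2
  have h3 : (C + 1) / ‖v‖ * ‖v‖ ≤ C := le_trans (by nlinarith) h2
  rw [div_mul_cancel₀ _ (ne_of_gt hv0)] at h3
  linarith

private lemma ker_sq_eq (A : Matrix (Fin N) (Fin N) ℂ) (C : ℝ) (v w : Fin N → ℂ)
    (hb : ∀ n : ℕ, ‖A ^ n *ᵥ v‖ ≤ C) (hv : A *ᵥ v = v + w) (hw : A *ᵥ w = w) : w = 0 := by
  have hwn : ∀ n : ℕ, A ^ n *ᵥ w = w := by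
    intro n
    have := pow_mulVec_eig A 1 w (by simpa using hw) n
    simpa using this
  have hn : ∀ n : ℕ, A ^ n *ᵥ v = v + (n : ℂ) • w := by
    intro n
    induction n with
    | zero => simp [Matrix.one_mulVec]
    | succ n ih =>
      rw [pow_succ, ← Matrix.mulVec_mulVec, hv, Matrix.mulVec_add, ih, hwn n]
      push_cast
      rw [add_smul, one_smul]
      abel
  by_contra hw0
  have hwpos : 0 < ‖w‖ := norm_pos_iff.mpr hw0
  obtain ⟨n, hn'⟩ := exists_nat_gt ((C + ‖v‖) / ‖w‖)
  have h1 : ‖(n : ℂ) • w‖ - ‖v‖ ≤ ‖A ^ n *ᵥ v‖ := by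
    rw [hn n]
    have h2 : ‖(n : ℂ) • w‖ ≤ ‖v + (n : ℂ) • w‖ + ‖v‖ := by
      simpa using norm_sub_le (v + (n : ℂ) • w) v
    linarith
  have h2 : ‖(n : ℂ) • w‖ = n * ‖w‖ := by
    rw [norm_smul]; simp
  have h3 := (h1.trans (hb n))
  rw [h2] at h3
  have h4 : (C + ‖v‖) / ‖w‖ * ‖w‖ < n * ‖w‖ := by
    exact mul_lt_mul_of_pos_right hn' hwpos
  rw [div_mul_cancel₀ _ (ne_of_gt hwpos)] at h4
  linarith

end SpectralHelpers


section GroupAlg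

variable {G : Type*} [Group G] [Fintype G] {N : ℕ}
variable (ρ : G →* Matrix (Fin N) (Fin N) ℂ) (q : G → ℝ)

private lemma sum_mulVec' {ι : Type*} (s : Finset ι) (f : ι → Matrix (Fin N) (Fin N) ℂ)
    (v : Fin N → ℂ) : (∑ i ∈ s, f i) *ᵥ v = ∑ i ∈ s, f i *ᵥ v := by
  induction s using Finset.cons_induction with
  | empty => simp [Matrix.zero_mulVec]
  | cons a s ha ih => simp only [Finset.sum_cons, Matrix.add_mulVec, ih]

/-- Powers of the averaged matrix are again averages of group elements. -/
private lemma pow_eq_avg (hqsum : ∑ h : G, q h = 1) (hq : ∀ h : G, 0 ≤ q h) (n : ℕ) :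
    ∃ p : G → ℝ, (∀ g, 0 ≤ p g) ∧ (∑ g : G, p g = 1) ∧
      (∑ h : G, q h • ρ h) ^ n = ∑ g : G, p g • ρ g := by
  classical
  induction n with
  | zero =>
    refine ⟨fun g => if g = 1 then 1 else 0, fun g => by positivity, by simp, ?_⟩
    rw [pow_zero, Finset.sum_eq_single 1]
    · simp
    · intro b _ hb; simp [hb]
    · simp
  | succ n ih =>
    obtain ⟨p, hp0, hp1, hpA⟩ := ih
    refine ⟨fun k => ∑ g : G, p g * q (g⁻¹ * k), fun k => Finset.sum_nonneg fun g _ => mul_nonneg (hp0 g) (hq _), ?_, ?_⟩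
    · rw [Finset.sum_comm]
      rw [show (1:ℝ) = ∑ g : G, p g * 1 by simp [hp1]]
      refine Finset.sum_congr rfl fun g _ => ?_
      rw [← Finset.mul_sum]
      congr 1
      rw [← hqsum]
      exact (Fintype.sum_equiv (Equiv.mulLeft g) _ _ (fun k => by simp)).symm
    · rw [pow_succ, hpA, Finset.sum_mul_sum]
      calc
        ∑ g : G, ∑ h : G, (p g • ρ g) * (q h • ρ h)
            = ∑ g : G, ∑ k : G, (p g * q (g⁻¹ * k)) • ρ k := by
              refine Finset.sum_congr rfl fun g _ => ?_
              refine Fintype.sum_equiv (Equiv.mulLeft g) _ _ (fun h => ?_)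
              simp only [Equiv.coe_mulLeft, inv_mul_cancel_left, smul_mul_smul_comm,
                ← _root_.map_mul]
        _ = ∑ k : G, (∑ g : G, p g * q (g⁻¹ * k)) • ρ k := by
              rw [Finset.sum_comm]
              exact Finset.sum_congr rfl fun k _ => (Finset.sum_smul).symm

/-- Orbit bound from the averaging property. -/
private lemma pow_mulVec_bound (hqsum : ∑ h : G, q h = 1) (hq : ∀ h : G, 0 ≤ q h)
    (v : Fin N → ℂ) (n : ℕ) :
    ‖(∑ h : G, q h • ρ h) ^ n *ᵥ v‖ ≤ ∑ g : G, ‖ρ g *ᵥ v‖ := by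
  obtain ⟨p, hp0, hp1, hpA⟩ := pow_eq_avg ρ q hqsum hq n
  rw [hpA, sum_mulVec']
  refine (norm_sum_le _ _).trans ?_
  refine Finset.sum_le_sum fun g _ => ?_
  rw [Matrix.smul_mulVec, norm_smul]
  have hpg1 : p g ≤ 1 := by
    rw [← hp1]
    exact Finset.single_le_sum (fun i _ => hp0 i) (Finset.mem_univ g)
  have : ‖p g‖ ≤ 1 := by rw [Real.norm_eq_abs, abs_of_nonneg (hp0 g)]; exact hpg1
  nlinarith [norm_nonneg (ρ g *ᵥ v), norm_nonneg (p g)]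

end GroupAlg


section Fixed

variable {G : Type*} [Group G] [Fintype G] {N : ℕ}
variable (ρ : G →* Matrix (Fin N) (Fin N) ℂ) (q : G → ℝ)

private lemma sum_mulVec'' {ι : Type*} (s : Finset ι) (f : ι → Matrix (Fin N) (Fin N) ℂ)
    (v : Fin N → ℂ) : (∑ i ∈ s, f i) *ᵥ v = ∑ i ∈ s, f i *ᵥ v := by
  induction s using Finset.cons_induction with
  | empty => simp [Matrix.zero_mulVec]
  | cons a s ha ih => simp only [Finset.sum_cons, Matrix.add_mulVec, ih]

/-- A vector fixed by the average is fixed by every group element. -/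
private lemma fixed_vec (hqsum : ∑ h : G, q h = 1) (hq : ∀ h : G, 0 ≤ q h)
    (hqpos : ∀ h : G, h ≠ 1 → 0 < q h) (v : Fin N → ℂ)
    (hv : (∑ h : G, q h • ρ h) *ᵥ v = v) (h : G) : ρ h *ᵥ v = v := by
  classical
  let F : (Fin N → ℂ) ≃ₗ[ℂ] EuclideanSpace ℂ (Fin N) :=
    (WithLp.linearEquiv 2 ℂ (Fin N → ℂ)).symm
  set u : G → EuclideanSpace ℂ (Fin N) := fun g => F (ρ g *ᵥ v) with hu
  obtain ⟨g₀, -, hg₀⟩ := Finset.exists_max_image Finset.univ (fun g => ‖u g‖)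
    ⟨1, Finset.mem_univ 1⟩
  set M : ℝ := ‖u g₀‖ with hM
  -- the key convexity identity
  have key : u g₀ = ∑ h : G, (q h : ℂ) • u (g₀ * h) := by
    have h1 : ρ g₀ *ᵥ v = ∑ h : G, q h • (ρ (g₀ * h) *ᵥ v) := by
      conv_lhs => rw [← hv, Matrix.mulVec_mulVec]
      rw [Finset.mul_sum]
      rw [show (∑ h : G, ρ g₀ * q h • ρ h) = ∑ h : G, q h • ρ (g₀ * h) by
        refine Finset.sum_congr rfl fun h _ => ?_
        rw [mul_smul_comm, ← _root_.map_mul]]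
      rw [sum_mulVec'']
      refine Finset.sum_congr rfl fun h _ => ?_
      rw [Matrix.smul_mulVec]
    rw [hu]
    simp only
    rw [h1, map_sum]
    refine Finset.sum_congr rfl fun h _ => ?_
    rw [RCLike.real_smul_eq_coe_smul (K := ℂ)]
    exact F.map_smul _ _
  -- equality in the triangle inequality
  have hle : ∀ h : G, ‖u (g₀ * h)‖ ≤ M := fun h => hg₀ _ (Finset.mem_univ _)
  have hre : ∀ h : G, RCLike.re (inner (𝕜 := ℂ) (u g₀) (u (g₀ * h))) ≤ M * M := fun h =>
    (re_inner_le_norm (𝕜 := ℂ) _ _).trans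
      (mul_le_mul_of_nonneg_left (hle h) (norm_nonneg _))
  have hsum : ∑ h : G, q h * RCLike.re (inner (𝕜 := ℂ) (u g₀) (u (g₀ * h))) = M ^ 2 := by
    have h2 : (inner (𝕜 := ℂ) (u g₀) (u g₀)) =
        ∑ h : G, (q h : ℂ) * inner (𝕜 := ℂ) (u g₀) (u (g₀ * h)) := by
      nth_rewrite 2 [key]
      rw [inner_sum]
      exact Finset.sum_congr rfl fun h _ => inner_smul_right _ _ _
    have h3 := congrArg (RCLike.re (K := ℂ)) h2
    rw [inner_self_eq_norm_sq] at h3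
    rw [← hM] at h3
    rw [h3, map_sum]
    refine Finset.sum_congr rfl fun h _ => ?_
    simp [Complex.mul_re]
  -- each term with positive weight achieves the max
  have hterm : ∀ h : G, q h ≠ 0 → u (g₀ * h) = u g₀ := by
    intro h₀ hq0
    have hsum0 : ∑ h : G, q h * (M ^ 2 - RCLike.re (inner (𝕜 := ℂ) (u g₀) (u (g₀ * h)))) = 0 := by
      simp only [mul_sub, Finset.sum_sub_distrib, ← Finset.sum_mul, hqsum, hsum]
      ring
    have hzero := (Finset.sum_eq_zero_iff_of_nonneg (fun h _ =>
      mul_nonneg (hq h) (by nlinarith [hre h]))).mp hsum0 h₀ (Finset.mem_univ _)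
    have hre0 : RCLike.re (inner (𝕜 := ℂ) (u g₀) (u (g₀ * h₀))) = M ^ 2 := by
      rcases mul_eq_zero.mp hzero with h' | h'
      · exact absurd h' hq0
      · nlinarith [hre h₀]
    have hnormsub : ‖u g₀ - u (g₀ * h₀)‖ ^ 2 ≤ 0 := by
      rw [norm_sub_sq (𝕜 := ℂ), hre0]
      have := hle h₀
      nlinarith [norm_nonneg (u (g₀ * h₀))]
    have : u g₀ - u (g₀ * h₀) = 0 := by
      have hn0 : ‖u g₀ - u (g₀ * h₀)‖ = 0 := by nlinarith [norm_nonneg (u g₀ - u (g₀ * h₀))]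
      exact norm_eq_zero.mp hn0
    exact (sub_eq_zero.mp this).symm
  -- all values agree
  have hall : ∀ k : G, u k = u g₀ := by
    intro k
    by_cases hk : k = g₀
    · rw [hk]
    · have h1 : g₀⁻¹ * k ≠ 1 := fun hcontra => hk (inv_mul_eq_one.mp hcontra).symm
      have := hterm (g₀⁻¹ * k) (ne_of_gt (hqpos _ h1))
      rwa [mul_inv_cancel_left] at this
  have h1 : u h = u 1 := (hall h).trans (hall 1).symm
  have h2 : u 1 = F v := by rw [hu]; simp [Matrix.one_mulVec]
  have := h1.trans h2
  exact F.injective this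

end Fixed


section Phi

variable {G : Type*} [Group G] [Fintype G] {N : ℕ}
variable (ρ : G →* Matrix (Fin N) (Fin N) ℂ)

private lemma Phi_mul_rep (h : G) :
    (((Fintype.card G : ℂ))⁻¹ • ∑ g : G, ρ g) * ρ h
      = ((Fintype.card G : ℂ))⁻¹ • ∑ g : G, ρ g := by
  rw [smul_mul_assoc, Finset.sum_mul]
  congr 1
  refine Fintype.sum_equiv (Equiv.mulRight h) _ _ fun g => ?_
  simp [← _root_.map_mul]

private lemma Phi_mul_avg (q : G → ℝ) (hqsum : ∑ h : G, q h = 1) :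
    (((Fintype.card G : ℂ))⁻¹ • ∑ g : G, ρ g) * (∑ h : G, q h • ρ h)
      = ((Fintype.card G : ℂ))⁻¹ • ∑ g : G, ρ g := by
  rw [Finset.mul_sum]
  rw [show (∑ h : G, (((Fintype.card G : ℂ))⁻¹ • ∑ g : G, ρ g) * (q h • ρ h))
      = ∑ h : G, q h • ((((Fintype.card G : ℂ))⁻¹ • ∑ g : G, ρ g)) from ?_]
  · rw [← Finset.sum_smul, hqsum, one_smul]
  · refine Finset.sum_congr rfl fun h _ => ?_
    rw [mul_smul_comm, Phi_mul_rep]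

private lemma Phi_fixed (v : Fin N → ℂ) (hv : ∀ h : G, ρ h *ᵥ v = v) :
    (((Fintype.card G : ℂ))⁻¹ • ∑ g : G, ρ g) *ᵥ v = v := by
  have hsum : (∑ g : G, ρ g) *ᵥ v = (Fintype.card G : ℂ) • v := by
    have : (∑ g : G, ρ g) *ᵥ v = ∑ g : G, ρ g *ᵥ v := by
      induction (Finset.univ : Finset G) using Finset.cons_induction with
      | empty => simp [Matrix.zero_mulVec]
      | cons a s ha ih => simp only [Finset.sum_cons, Matrix.add_mulVec, ih]
    rw [this]
    rw [Finset.sum_congr rfl fun g _ => hv g, Finset.sum_const, Finset.card_univ]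
    exact (Nat.cast_smul_eq_nsmul ℂ _ _).symm
  rw [Matrix.smul_mulVec, hsum, smul_smul, inv_mul_cancel₀, one_smul]
  exact_mod_cast Nat.cast_ne_zero.mpr Fintype.card_ne_zero

end Phi


section Decay

variable {N : ℕ}

private lemma map_exp_matrix' {E : Type*} [NormedAddCommGroup E] [NormedSpace ℂ E]
    (L : Matrix (Fin N) (Fin N) ℂ →ₗ[ℂ] E) (M : Matrix (Fin N) (Fin N) ℂ) :
    L (exp M) = ∑' n : ℕ, L ((n.factorial :ℂ)⁻¹ • M ^ n) := by
  letI : SeminormedRing (Matrix (Fin N) (Fin N) ℂ) := Matrix.linftyOpSemiNormedRing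
  letI : NormedRing (Matrix (Fin N) (Fin N) ℂ) := Matrix.linftyOpNormedRing
  letI : NormedAlgebra ℂ (Matrix (Fin N) (Fin N) ℂ) := Matrix.linftyOpNormedAlgebra
  have hc : Continuous L := L.continuous_of_finiteDimensional
  have hs := NormedSpace.expSeries_summable' (𝕂 := ℂ) M
  rw [NormedSpace.exp_eq_tsum (𝕂 := ℂ)]
  exact (hs.hasSum.map L hc).tsum_eq.symm

private lemma exp_mulVec_eq_tsum' (M : Matrix (Fin N) (Fin N) ℂ) (v : Fin N → ℂ) :
    exp M *ᵥ v = ∑' n : ℕ, (n.factorial : ℂ)⁻¹ • (M ^ n *ᵥ v) := by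
  let L : Matrix (Fin N) (Fin N) ℂ →ₗ[ℂ] (Fin N → ℂ) :=
    { toFun := fun P => P *ᵥ v
      map_add' := fun P Q => Matrix.add_mulVec P Q v
      map_smul' := fun c P => Matrix.smul_mulVec c P v }
  have := map_exp_matrix' L M
  simpa only [L, LinearMap.coe_mk, AddHom.coe_mk, Matrix.smul_mulVec] using this

private lemma exp_smul_one' (c : ℂ) :
    exp (c • (1 : Matrix (Fin N) (Fin N) ℂ)) = Complex.exp c • 1 := by
  letI : SeminormedRing (Matrix (Fin N) (Fin N) ℂ) := Matrix.linftyOpSemiNormedRing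
  letI : NormedRing (Matrix (Fin N) (Fin N) ℂ) := Matrix.linftyOpNormedRing
  letI : NormedAlgebra ℂ (Matrix (Fin N) (Fin N) ℂ) := Matrix.linftyOpNormedAlgebra
  have h1 : c • (1 : Matrix (Fin N) (Fin N) ℂ) = algebraMap ℂ _ c :=
    (Algebra.algebraMap_eq_smul_one c).symm
  have h2 : Complex.exp c • (1 : Matrix (Fin N) (Fin N) ℂ) = algebraMap ℂ _ (Complex.exp c) :=
    (Algebra.algebraMap_eq_smul_one _).symm
  rw [h1, h2, Complex.exp_eq_exp_ℂ]
  exact (NormedSpace.algebraMap_exp_comm c).symm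

private lemma exp_mulVec_of_ker (M : Matrix (Fin N) (Fin N) ℂ) (v : Fin N → ℂ)
    (hv : M *ᵥ v = 0) : exp M *ᵥ v = v := by
  rw [exp_mulVec_eq_tsum']
  rw [tsum_eq_single 0]
  · simp [Matrix.one_mulVec]
  · intro n hn
    obtain ⟨m, rfl⟩ := Nat.exists_eq_succ_of_ne_zero hn
    rw [pow_succ, ← Matrix.mulVec_mulVec, hv, Matrix.mulVec_zero, smul_zero]

private lemma exp_decay (B : Matrix (Fin N) (Fin N) ℂ) (μ : ℂ) (hμ : μ.re < 0) (k : ℕ)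
    (v : Fin N → ℂ) (hv : (B - μ • 1) ^ k *ᵥ v = 0) :
    Tendsto (fun t : ℝ => exp ((t : ℂ) • B) *ᵥ v) atTop (𝓝 0) := by
  set C := B - μ • (1 : Matrix (Fin N) (Fin N) ℂ) with hC
  have hsplit : ∀ t : ℝ, (t : ℂ) • B = ((t : ℂ) * μ) • 1 + (t : ℂ) • C := by
    intro t
    rw [hC, smul_sub, smul_smul, ← add_sub_assoc]
    abel
  have hexp : ∀ t : ℝ, exp ((t : ℂ) • B) *ᵥ v =
      ∑ n ∈ Finset.range k,
        (Complex.exp ((t : ℂ) * μ) * ((n.factorial : ℂ)⁻¹ * (t : ℂ) ^ n)) • (C ^ n *ᵥ v) := by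
    intro t
    have hcomm : Commute (((t : ℂ) * μ) • (1 : Matrix (Fin N) (Fin N) ℂ)) ((t : ℂ) • C) :=
      ((Commute.one_left ((t : ℂ) • C)).smul_left _)
    rw [hsplit t, Matrix.exp_add_of_commute _ _ hcomm, exp_smul_one', smul_mul_assoc, one_mul,
      Matrix.smul_mulVec]
    have htail : exp ((t : ℂ) • C) *ᵥ v =
        ∑ n ∈ Finset.range k, ((n.factorial : ℂ)⁻¹ * (t : ℂ) ^ n) • (C ^ n *ᵥ v) := by
      rw [exp_mulVec_eq_tsum']
      rw [tsum_eq_sum (s := Finset.range k) ?_]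
      · refine Finset.sum_congr rfl fun n _ => ?_
        rw [smul_pow, Matrix.smul_mulVec, smul_smul]
      · intro n hn
        rw [Finset.mem_range, not_lt] at hn
        have : C ^ n *ᵥ v = 0 := by
          have h1 : C ^ n = C ^ (n - k) * C ^ k := by
            rw [← pow_add]
            congr 1
            omega
          rw [h1, ← Matrix.mulVec_mulVec, hv, Matrix.mulVec_zero]
        rw [smul_pow, Matrix.smul_mulVec, this, smul_zero, smul_zero]
    rw [htail, Finset.smul_sum]
    refine Finset.sum_congr rfl fun n _ => ?_
    rw [smul_smul]
  have hterm : ∀ n : ℕ, Tendsto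
      (fun t : ℝ => (Complex.exp ((t : ℂ) * μ) * ((n.factorial : ℂ)⁻¹ * (t : ℂ) ^ n)) •
        (C ^ n *ᵥ v)) atTop (𝓝 0) := by
    intro n
    have hbase : Tendsto (fun t : ℝ => t ^ n * Real.exp (μ.re * t)) atTop (𝓝 0) := by
      have h1 : Tendsto (fun t : ℝ => (-μ.re) * t) atTop atTop :=
        tendsto_id.const_mul_atTop (by linarith)
      have h2 := (Real.tendsto_pow_mul_exp_neg_atTop_nhds_zero n).comp h1
      have h3 := h2.const_mul (((-μ.re)⁻¹) ^ n)
      rw [mul_zero] at h3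
      refine h3.congr fun t => ?_
      have hne : -μ.re ≠ 0 := by linarith
      simp only [Function.comp_apply, neg_mul, neg_neg]
      rw [show (-(μ.re * t)) ^ n = (-μ.re) ^ n * t ^ n by rw [← mul_pow]; ring_nf]
      field_simp
      rw [← mul_pow, neg_mul_neg, one_div, inv_mul_cancel₀ (by linarith : μ.re ≠ 0), one_pow, one_mul]
    have hscal : Tendsto
        (fun t : ℝ => Complex.exp ((t : ℂ) * μ) * ((n.factorial : ℂ)⁻¹ * (t : ℂ) ^ n))
        atTop (𝓝 0) := by
      apply squeeze_zero_norm' (a := fun t : ℝ => (n.factorial : ℝ)⁻¹ * (t ^ n * Real.exp (μ.re * t)))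
      · filter_upwards [eventually_ge_atTop (0 : ℝ)] with t ht
        rw [norm_mul, norm_mul, Complex.norm_exp]
        have h1 : ((t : ℂ) * μ).re = t * μ.re := by simp
        rw [h1]
        have h2 : ‖(t : ℂ) ^ n‖ = t ^ n := by
          rw [norm_pow, Complex.norm_real, Real.norm_eq_abs, abs_of_nonneg ht]
        have h3 : ‖((n.factorial : ℂ))⁻¹‖ = (n.factorial : ℝ)⁻¹ := by
          rw [norm_inv]
          norm_num
        rw [h2, h3, mul_comm t μ.re]
        ring_nf
        exact le_refl _
      · simpa using hbase.const_mul ((n.factorial : ℝ)⁻¹)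
    simpa using hscal.smul_const (C ^ n *ᵥ v)
  have := tendsto_finset_sum (Finset.range k) (fun n _ => hterm n)
  rw [Finset.sum_const_zero] at this
  exact Tendsto.congr (fun t => (hexp t).symm) this

end Decay


section MainAux

variable {N : ℕ}

private lemma endpow_eq (P : Matrix (Fin N) (Fin N) ℂ) (k : ℕ) (w : Fin N → ℂ) :
    ((P.mulVecLin) ^ k) w = P ^ k *ᵥ w := by
  induction k generalizing w with
  | zero => simp [Matrix.one_mulVec]
  | succ k ih =>
    rw [pow_succ, Module.End.mul_apply, Matrix.mulVecLin_apply, ih, Matrix.mulVec_mulVec,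
      ← pow_succ]

private lemma mulVecLin_sub_smul_one (B : Matrix (Fin N) (Fin N) ℂ) (μ : ℂ) :
    B.mulVecLin - μ • (1 : Module.End ℂ (Fin N → ℂ)) = (B - μ • 1).mulVecLin := by
  refine LinearMap.ext fun w => ?_
  simp only [LinearMap.sub_apply, LinearMap.smul_apply, Module.End.one_apply,
    Matrix.mulVecLin_apply, Matrix.sub_mulVec, Matrix.smul_mulVec, Matrix.one_mulVec]

private lemma Phi_mul_pow (Φ B : Matrix (Fin N) (Fin N) ℂ) (hΦB : Φ * B = 0) (μ : ℂ) (k : ℕ) :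
    Φ * (B - μ • 1) ^ k = ((-μ) ^ k) • Φ := by
  induction k with
  | zero => simp
  | succ k ih =>
    rw [pow_succ, ← mul_assoc, ih, smul_mul_assoc, mul_sub, hΦB, mul_smul_comm, mul_one,
      zero_sub, smul_neg, smul_smul]
    rw [show (-μ) ^ k * μ = -((-μ) ^ (k + 1)) by ring, neg_smul, neg_neg]

end MainAux


/-- For a generic generator (all weights off the identity strictly positive), the
semigroup `exp(t • (∑ q h • ρ h − 1))` converges, as `t → ∞`, to the uniform mixture
`(1/|G|) • ∑ ρ h` of all group members. -/
theorem accessible_trajectory_tendsto_center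
    {G : Type*} [Group G] [Fintype G] {N : ℕ}
    (ρ : G →* Matrix (Fin N) (Fin N) ℂ)
    (q : G → ℝ) (hqsum : ∑ h : G, q h = 1) (hq : ∀ h : G, 0 ≤ q h)
    (hqpos : ∀ h : G, h ≠ 1 → 0 < q h) :
    Filter.Tendsto (fun t : ℝ => NormedSpace.exp (t • ((∑ h : G, q h • ρ h) - 1)))
      Filter.atTop (nhds (((Fintype.card G : ℂ))⁻¹ • ∑ h : G, ρ h)) := by
  classical
  set A : Matrix (Fin N) (Fin N) ℂ := ∑ h : G, q h • ρ h with hA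
  set B : Matrix (Fin N) (Fin N) ℂ := A - 1 with hB
  set Φ : Matrix (Fin N) (Fin N) ℂ := ((Fintype.card G : ℂ))⁻¹ • ∑ h : G, ρ h with hΦ
  have hbound : ∀ w : Fin N → ℂ, ∀ n : ℕ, ‖A ^ n *ᵥ w‖ ≤ ∑ g : G, ‖ρ g *ᵥ w‖ :=
    fun w n => pow_mulVec_bound ρ q hqsum hq w n
  have hΦB : Φ * B = 0 := by
    rw [hB, mul_sub, mul_one, hΦ, hA, Phi_mul_avg ρ q hqsum, sub_self]
  have hBA : ∀ w : Fin N → ℂ, B *ᵥ w = A *ᵥ w - w := by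
    intro w; rw [hB, Matrix.sub_mulVec, Matrix.one_mulVec]
  have key : ∀ w : Fin N → ℂ,
      Tendsto (fun t : ℝ => exp (t • B) *ᵥ w) atTop (𝓝 (Φ *ᵥ w)) := by
    intro w
    let S : Submodule ℂ (Fin N → ℂ) :=
      { carrier := {u | Tendsto (fun t : ℝ => exp (t • B) *ᵥ u) atTop (𝓝 (Φ *ᵥ u))}
        add_mem' := by
          intro x y hx hy
          simp only [Set.mem_setOf_eq, Matrix.mulVec_add] at *
          exact hx.add hy
        zero_mem' := by
          simp only [Set.mem_setOf_eq, Matrix.mulVec_zero]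
          exact tendsto_const_nhds
        smul_mem' := by
          intro c x hx
          simp only [Set.mem_setOf_eq, Matrix.mulVec_smul] at *
          exact hx.const_smul c }
    have hSmem : ∀ u : Fin N → ℂ,
        u ∈ S ↔ Tendsto (fun t : ℝ => exp (t • B) *ᵥ u) atTop (𝓝 (Φ *ᵥ u)) :=
      fun u => Iff.rfl
    suffices hle : ∀ μ : ℂ, (Module.End.maxGenEigenspace (Matrix.mulVecLin B) μ) ≤ S by
      have htop := Module.End.iSup_maxGenEigenspace_eq_top (Matrix.mulVecLin B)
      have hw : w ∈ (⊤ : Submodule ℂ (Fin N → ℂ)) := Submodule.mem_top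
      rw [← htop] at hw
      exact (hSmem w).mp ((iSup_le hle : _ ≤ S) hw)
    intro μ u hu
    obtain ⟨k, hk⟩ := (Module.End.mem_maxGenEigenspace _ _ _).mp hu
    rw [mulVecLin_sub_smul_one, endpow_eq] at hk
    by_cases hμ : μ = 0
    · subst hμ
      rw [show B - (0 : ℂ) • 1 = B by rw [zero_smul, sub_zero]] at hk
      have hker : ∀ (m : ℕ) (u : Fin N → ℂ), B ^ m *ᵥ u = 0 → B *ᵥ u = 0 := by
        intro m
        induction m with
        | zero =>
          intro u h0
          rw [pow_zero, Matrix.one_mulVec] at h0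
          rw [h0, Matrix.mulVec_zero]
        | succ m ih =>
          intro u h0
          rw [pow_succ, ← Matrix.mulVec_mulVec] at h0
          have h1 := ih _ h0
          rw [hBA (B *ᵥ u)] at h1
          have h2 : A *ᵥ (B *ᵥ u) = B *ᵥ u := sub_eq_zero.mp h1
          have hv : A *ᵥ u = u + B *ᵥ u := by rw [hBA u]; abel
          exact ker_sq_eq A _ u (B *ᵥ u) (hbound u) hv h2
      have hBu : B *ᵥ u = 0 := hker k u hk
      have hAu : A *ᵥ u = u := by
        have := hBA u
        rw [hBu] at this
        exact (sub_eq_zero.mp this.symm)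
      have hfix := fixed_vec ρ q hqsum hq hqpos u hAu
      have hΦu : Φ *ᵥ u = u := by rw [hΦ]; exact Phi_fixed ρ u hfix
      have hexp : ∀ t : ℝ, exp (t • B) *ᵥ u = u := fun t =>
        exp_mulVec_of_ker _ _ (by rw [Matrix.smul_mulVec, hBu, smul_zero])
      refine (hSmem u).mpr ?_
      rw [funext hexp, hΦu]
      exact tendsto_const_nhds
    · by_cases hu0 : u = 0
      · exact hu0 ▸ S.zero_mem
      · have hex : ∃ j : ℕ, (B - μ • 1) ^ j *ᵥ u = 0 := ⟨k, hk⟩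
        let j := Nat.find hex
        have hj : (B - μ • 1) ^ j *ᵥ u = 0 := Nat.find_spec hex
        have hj0 : j ≠ 0 := by
          intro h0
          rw [h0, pow_zero, Matrix.one_mulVec] at hj
          exact hu0 hj
        set x := (B - μ • 1) ^ (j - 1) *ᵥ u with hx
        have hx0 : x ≠ 0 := fun hxz => Nat.find_min hex (Nat.pred_lt hj0) hxz
        have hCx : (B - μ • 1) *ᵥ x = 0 := by
          rw [hx, Matrix.mulVec_mulVec, ← pow_succ',
            Nat.sub_add_cancel (Nat.one_le_iff_ne_zero.mpr hj0)]
          exact hj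
        have hBx : B *ᵥ x = μ • x := by
          rw [Matrix.sub_mulVec, Matrix.smul_mulVec, Matrix.one_mulVec] at hCx
          exact sub_eq_zero.mp hCx
        have hAx : A *ᵥ x = (μ + 1) • x := by
          have h1 := hBA x
          rw [hBx] at h1
          rw [add_smul, one_smul, h1]
          abel
        have habs : ‖μ + 1‖ ≤ 1 := eig_abs_le_one A _ x (μ + 1) (hbound x) hAx hx0
        have hre : μ.re < 0 := by
          have h1 : ‖μ + 1‖ ≤ 1 := habs
          have h2 : Complex.normSq (μ + 1) ≤ 1 := by
            rw [← Complex.sq_norm]; nlinarith [norm_nonneg (μ + 1)]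
          rw [Complex.normSq_apply] at h2
          simp only [Complex.add_re, Complex.one_re, Complex.add_im, Complex.one_im,
            add_zero] at h2
          by_contra hcon
          push_neg at hcon
          have him : μ.im = 0 := by nlinarith [sq_nonneg μ.re, sq_nonneg μ.im]
          have hre0 : μ.re = 0 := by nlinarith [sq_nonneg μ.im]
          exact hμ (Complex.ext hre0 him)
        have hdecay := exp_decay B μ hre k u hk
        have hΦu : Φ *ᵥ u = 0 := by
          have h1 := Phi_mul_pow Φ B hΦB μ k
          have h2 : Φ *ᵥ ((B - μ • 1) ^ k *ᵥ u) = 0 := by rw [hk, Matrix.mulVec_zero]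
          rw [Matrix.mulVec_mulVec, h1, Matrix.smul_mulVec] at h2
          exact (smul_eq_zero.mp h2).resolve_left (pow_ne_zero k (neg_ne_zero.mpr hμ))
        refine (hSmem u).mpr ?_
        rw [hΦu]
        refine hdecay.congr fun t => ?_
        have hsm : t • B = (t : ℂ) • B := by
          ext i j
          simp [Complex.real_smul]
        rw [hsm]
  have hent : ∀ i j : Fin N, Tendsto (fun t : ℝ => exp (t • B) i j) atTop (𝓝 (Φ i j)) := by
    intro i j
    have h1 := key (Pi.single j 1)
    have h2 := (tendsto_pi_nhds.mp h1) i
    simpa [Matrix.mulVec_single] using h2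
  exact tendsto_pi_nhds.mpr fun i => tendsto_pi_nhds.mpr fun j => hent i j
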